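/- Let K ≥ 2. Then H^1(Asym(σ_K)) = +∞, H^2(Prox(σ_K)) = H^2(LY(σ_K)) = 1, and H^2(Dist(σ_K)) = 0, where these are subsets of Σ_K × Σ_K. -/

import Mathlib

open Filter Set MeasureTheory Topology TopologicalSpace

noncomputable section

/-- The symbolic space `Σ_K` on `K` symbols: sequences `ℕ → Fin K`. -/
def SymbSp (K : ℕ) : Type := ℕ → Fin K

namespace SymbSp

variable {K : ℕ}

theorem exists_ne {x y : SymbSp K} (h : ¬x = y) : ∃ i, x i ≠ y i := by
  by_contra hc
  push_neg at hc
  exact h (funext hc)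

instance decNe (x y : SymbSp K) : DecidablePred fun n => x n ≠ y n :=
  fun n => inferInstanceAs (Decidable (¬ (x n : Fin K) = y n))

open Classical in
/-- The metric `ρ(x,y) = K^{-δ(x,y)}` on `Σ_K`. -/
def sdist (x y : SymbSp K) : ℝ :=
  if h : x = y then 0 else ((K : ℝ))⁻¹ ^ Nat.find (exists_ne h)

theorem sdist_self (x : SymbSp K) : sdist x x = 0 := by
  unfold sdist
  exact dif_pos rfl

theorem sdist_eq {x y : SymbSp K} (h : ¬x = y) :
    sdist x y = ((K : ℝ))⁻¹ ^ Nat.find (exists_ne h) := by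
  unfold sdist
  exact dif_neg h

theorem sdist_nonneg' (x y : SymbSp K) : 0 ≤ sdist x y := by
  unfold sdist
  split
  · exact le_rfl
  · positivity

theorem inv_cast_le_one (K : ℕ) : ((K : ℝ))⁻¹ ≤ 1 := by
  rcases Nat.eq_zero_or_pos K with h | h
  · simp [h]
  · exact inv_le_one_of_one_le₀ (by exact_mod_cast h)

theorem eq_of_lt_find {x y : SymbSp K} (h : ¬x = y) {i : ℕ}
    (hi : i < Nat.find (exists_ne h)) : x i = y i :=
  not_not.mp (Nat.find_min (exists_ne h) hi)

theorem sdist_le_of_agree {x y : SymbSp K} {n : ℕ} (h : ∀ i < n, x i = y i) :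
    sdist x y ≤ ((K : ℝ))⁻¹ ^ n := by
  by_cases hxy : x = y
  · rw [hxy, sdist_self]; positivity
  · rw [sdist_eq hxy]
    apply pow_le_pow_of_le_one (by positivity) (inv_cast_le_one K)
    rw [Nat.le_find_iff]
    intro m hm
    simp only [ne_eq, not_not]
    exact h m hm

theorem sdist_comm (x y :  SymbSp K) : sdist x y = sdist y x := by
  by_cases h : x = y
  · rw [h]
  · rw [sdist_eq h, sdist_eq (fun hyx => h hyx.symm)]
    congr 1
    exact le_antisymm (Nat.find_mono fun n hn => hn.symm)
      (Nat.find_mono fun n hn => hn.symm)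

theorem sdist_le_max (x y z : SymbSp K) : sdist x z ≤ max (sdist x y) (sdist y z) := by
  by_cases hxz : x = z
  · rw [hxz, sdist_self]
    exact le_max_of_le_left (sdist_nonneg' _ _)
  by_cases hxy : x = y
  · rw [hxy]; exact le_max_right _ _
  by_cases hyz : y = z
  · rw [← hyz]; exact le_max_left _ _
  rcases le_total (Nat.find (exists_ne hxy)) (Nat.find (exists_ne hyz)) with hle | hle
  · refine le_max_of_le_left ?_
    rw [sdist_eq hxy]
    exact sdist_le_of_agree fun i hi =>
      (eq_of_lt_find hxy hi).trans (eq_of_lt_find hyz (lt_of_lt_of_le hi hle))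
  · refine le_max_of_le_right ?_
    rw [sdist_eq hyz]
    exact sdist_le_of_agree fun i hi =>
      (eq_of_lt_find hxy (lt_of_lt_of_le hi hle)).trans (eq_of_lt_find hyz hi)

theorem eq_of_sdist_eq_zero {x y : SymbSp K} (h : sdist x y = 0) : x = y := by
  by_contra hxy
  rw [sdist_eq hxy] at h
  have hK : (0 : ℝ) < (K : ℝ) := by exact_mod_cast Fin.pos (x 0)
  exact absurd h (ne_of_gt (pow_pos (inv_pos.mpr hK) _))

instance : MetricSpace (SymbSp K) where
  dist := sdist
  dist_self := sdist_self
  dist_comm := sdist_comm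
  dist_triangle x y z :=
    (sdist_le_max x y z).trans (max_le_add_of_nonneg (sdist_nonneg' _ _) (sdist_nonneg' _ _))
  eq_of_dist_eq_zero := fun h => eq_of_sdist_eq_zero h

instance : MeasurableSpace (SymbSp K) := borel _

instance : BorelSpace (SymbSp K) := ⟨rfl⟩

instance : SeparableSpace (SymbSp K) := by
  obtain hK | hK | hK : K = 0 ∨ K = 1 ∨ 2 ≤ K := by omega
  · subst hK
    haveI : IsEmpty (SymbSp 0) := ⟨fun x => (x 0).elim0⟩
    exact ⟨⟨Set.univ, Set.countable_univ, dense_univ⟩⟩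
  · subst hK
    haveI : Subsingleton (SymbSp 1) := ⟨fun x y => funext fun i => Subsingleton.elim _ _⟩
    exact ⟨⟨Set.univ, Set.countable_univ, dense_univ⟩⟩
  · refine ⟨⟨Set.range (fun w : (Σ n : ℕ, (Fin n → Fin K)) =>
      (fun i => if h : i < w.1 then w.2 ⟨i, h⟩ else ⟨0, by omega⟩ : SymbSp K)),
      Set.countable_range _, ?_⟩⟩
    rw [Metric.dense_iff]
    intro x r hr
    obtain ⟨n, hn⟩ : ∃ n : ℕ, ((K : ℝ))⁻¹ ^ n < r :=
      exists_pow_lt_of_lt_one hr (inv_lt_one_of_one_lt₀ (by exact_mod_cast hK))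
    refine ⟨(fun i => if h : i < n then x i else ⟨0, by omega⟩ : SymbSp K),
      ?_, ⟨⟨n, fun j => x j⟩, rfl⟩⟩
    refine Metric.mem_ball.mpr ?_
    exact lt_of_le_of_lt (sdist_le_of_agree fun i hi => dif_pos hi) hn

instance : SecondCountableTopology (SymbSp K) :=
  UniformSpace.secondCountable_of_separable _

end SymbSp

/-- The shift map `σ_K` on `Σ_K`. -/
def shift (K : ℕ) : SymbSp K → SymbSp K := fun x i => x (i + 1)

end
/-- The set of asymptotic pairs of `σ_K`. -/
def AsymSet (K : ℕ) : Set (SymbSp K × SymbSp K) :=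
  {z | Filter.Tendsto (fun i : ℕ => dist ((shift K)^[i] z.1) ((shift K)^[i] z.2))
        Filter.atTop (nhds 0)}

/-- The set of proximal pairs of `σ_K`. -/
def ProxSet (K : ℕ) : Set (SymbSp K × SymbSp K) :=
  {z | Filter.liminf (fun i : ℕ => dist ((shift K)^[i] z.1) ((shift K)^[i] z.2))
        Filter.atTop = 0}

/-- The set of distal pairs of `σ_K`. -/
def DistSet (K : ℕ) : Set (SymbSp K × SymbSp K) :=
  {z | 0 < Filter.liminf (fun i : ℕ => dist ((shift K)^[i] z.1) ((shift K)^[i] z.2))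
        Filter.atTop}

/-- The set of Li–Yorke pairs of `σ_K`: proximal but not asymptotic pairs. -/
def LYset (K : ℕ) : Set (SymbSp K × SymbSp K) := ProxSet K \ AsymSet K

/-! ### Auxiliary lemmas -/

namespace SymbS75

open SymbSp

variable {K : ℕ}

theorem symb_dist_eq (x y : SymbSp K) : dist x y = sdist x y := rfl

theorem sdist_le_one (hK : 2 ≤ K) (x y : SymbSp K) : sdist x y ≤ 1 := by
  by_cases h : x = y
  · rw [h, sdist_self]; exact zero_le_one
  · rw [sdist_eq h]
    exact pow_le_one₀ (by positivity) (inv_cast_le_one K)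

theorem invK_pos (hK : 2 ≤ K) : (0:ℝ) < (K:ℝ)⁻¹ := by
  have : (0:ℝ) < K := by exact_mod_cast (by omega : 0 < K)
  positivity

theorem invK_lt_one (hK : 2 ≤ K) : (K:ℝ)⁻¹ < 1 :=
  inv_lt_one_of_one_lt₀ (by exact_mod_cast (by omega : 1 < K))

/-- If `sdist x y ≤ K⁻¹ ^ n` then `x` and `y` agree below `n`. -/
theorem agree_of_sdist_le (hK : 2 ≤ K) {x y : SymbSp K} {n : ℕ}
    (h : sdist x y ≤ ((K:ℝ))⁻¹ ^ n) : ∀ i < n, x i = y i := by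
  intro i hi
  by_cases hxy : x = y
  · rw [hxy]
  · rw [sdist_eq hxy] at h
    have hfind : n ≤ Nat.find (exists_ne hxy) := by
      by_contra hlt
      push_neg at hlt
      have := pow_lt_pow_iff_right_of_lt_one₀ (invK_pos hK) (invK_lt_one hK)
        (n := Nat.find (exists_ne hxy)) (m := n)
      exact absurd h (not_le.mpr ((this).mpr hlt))
    exact eq_of_lt_find hxy (lt_of_lt_of_le hi hfind)

/-- `K⁻¹ ^ m < sdist x y` iff `x,y` disagree somewhere below `m`. -/
theorem lt_sdist_iff (hK : 2 ≤ K) (x y : SymbSp K) (m : ℕ) :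
    ((K:ℝ))⁻¹ ^ m < sdist x y ↔ ∃ j < m, x j ≠ y j := by
  constructor
  · intro h
    by_contra hc
    push_neg at hc
    exact absurd (sdist_le_of_agree fun i hi => hc i hi) (not_le.mpr h)
  · rintro ⟨j, hj, hne⟩
    by_contra hc
    push_neg at hc
    exact hne (agree_of_sdist_le hK hc j hj)

theorem le_sdist_of_disagree (hK : 2 ≤ K) {x y : SymbSp K} {j : ℕ}
    (hne : x j ≠ y j) : ((K:ℝ))⁻¹ ^ j ≤ sdist x y := by
  have hxy : ¬ x = y := fun h => hne (by rw [h])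
  rw [sdist_eq hxy]
  exact pow_le_pow_of_le_one (invK_pos hK).le (inv_cast_le_one K)
    (Nat.find_min' (exists_ne hxy) hne)

theorem agree_of_sdist_lt (hK : 2 ≤ K) {x y : SymbSp K} {n : ℕ}
    (h : sdist x y < ((K:ℝ))⁻¹ ^ n) : ∀ i ≤ n, x i = y i := by
  intro i hi
  by_contra hne
  have h1 : ((K:ℝ))⁻¹ ^ n ≤ ((K:ℝ))⁻¹ ^ i :=
    pow_le_pow_of_le_one (invK_pos hK).le (inv_cast_le_one K) hi
  exact absurd (h1.trans (le_sdist_of_disagree hK hne)) (not_le.mpr h)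

theorem shift_iterate (i : ℕ) (x : SymbSp K) : (shift K)^[i] x = fun j => x (j + i) := by
  induction i with
  | zero => rfl
  | succ n ih =>
    rw [Function.iterate_succ_apply', ih]
    funext j
    show x (j + 1 + n) = x (j + (n+1))
    ring_nf

theorem shift_iterate_apply (i j : ℕ) (x : SymbSp K) : ((shift K)^[i] x) j = x (j + i) := by
  rw [shift_iterate]

end SymbS75

namespace SymbS75

open SymbSp

variable {K : ℕ}

/-- The tail-agreement sets whose union is `AsymSet`. -/
def Aset (K N : ℕ) : Set (SymbSp K × SymbSp K) := {z | ∀ i, N ≤ i → z.1 i = z.2 i}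

/-- The window-disagreement sets whose union is `DistSet`. -/
def Eset (K m N : ℕ) : Set (SymbSp K × SymbSp K) :=
  {z | ∀ i, N ≤ i → ∃ j < m, z.1 (j + i) ≠ z.2 (j + i)}

theorem asymSet_eq_iUnion (hK : 2 ≤ K) : AsymSet K = ⋃ N, Aset K N := by
  ext z
  simp only [AsymSet, Set.mem_setOf_eq, Set.mem_iUnion]
  constructor
  · intro h
    have h1 : ∀ᶠ i in Filter.atTop,
        dist ((shift K)^[i] z.1) ((shift K)^[i] z.2) < 1 :=
      h.eventually (gt_mem_nhds (by norm_num : (0:ℝ) < 1))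
    rw [Filter.eventually_atTop] at h1
    obtain ⟨N, hN⟩ := h1
    refine ⟨N, fun i hi => ?_⟩
    have := agree_of_sdist_lt hK (n := 0) (by
      simpa [symb_dist_eq] using hN i hi) 0 le_rfl
    simpa [shift_iterate_apply] using this
  · rintro ⟨N, hN⟩
    have : ∀ i, N ≤ i → dist ((shift K)^[i] z.1) ((shift K)^[i] z.2) = 0 := by
      intro i hi
      have : (shift K)^[i] z.1 = (shift K)^[i] z.2 := by
        funext j
        rw [shift_iterate_apply, shift_iterate_apply]
        exact hN (j + i) (le_trans hi (Nat.le_add_left i j))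
      rw [this, dist_self]
    refine Filter.Tendsto.congr' ?_ tendsto_const_nhds
    filter_upwards [Filter.eventually_atTop.mpr ⟨N, fun i hi => this i hi⟩] with i h
    exact h.symm

theorem aset_subset_asym (hK : 2 ≤ K) (N : ℕ) : Aset K N ⊆ AsymSet K := by
  rw [asymSet_eq_iUnion hK]
  exact Set.subset_iUnion (Aset K) N

theorem distSet_eq_iUnion (hK : 2 ≤ K) : DistSet K = ⋃ m, ⋃ N, Eset K m N := by
  have hb : ∀ z : SymbSp K × SymbSp K, Filter.IsBoundedUnder (· ≤ ·) Filter.atTop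
      (fun i : ℕ => dist ((shift K)^[i] z.1) ((shift K)^[i] z.2)) := by
    intro z
    exact Filter.isBoundedUnder_of ⟨1, fun i => sdist_le_one hK _ _⟩
  ext z
  simp only [DistSet, Set.mem_setOf_eq, Set.mem_iUnion]
  constructor
  · intro h
    obtain ⟨m, hm⟩ : ∃ m : ℕ, ((K:ℝ))⁻¹ ^ m <
        Filter.liminf (fun i : ℕ => dist ((shift K)^[i] z.1) ((shift K)^[i] z.2))
          Filter.atTop :=
      exists_pow_lt_of_lt_one h (invK_lt_one hK)
    have hev := Filter.eventually_lt_of_lt_liminf hm (by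
      exact Filter.isBoundedUnder_of ⟨0, fun i => dist_nonneg⟩)
    rw [Filter.eventually_atTop] at hev
    obtain ⟨N, hN⟩ := hev
    refine ⟨m, N, fun i hi => ?_⟩
    have := (lt_sdist_iff hK ((shift K)^[i] z.1) ((shift K)^[i] z.2) m).mp
      (by simpa [symb_dist_eq] using hN i hi)
    simpa [shift_iterate_apply] using this
  · rintro ⟨m, N, hN⟩
    have hev : ∀ᶠ i in Filter.atTop, ((K:ℝ))⁻¹ ^ m ≤
        dist ((shift K)^[i] z.1) ((shift K)^[i] z.2) := by
      rw [Filter.eventually_atTop]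
      refine ⟨N, fun i hi => ?_⟩
      rw [symb_dist_eq]
      refine ((lt_sdist_iff hK ((shift K)^[i] z.1) ((shift K)^[i] z.2) m).mpr ?_).le
      obtain ⟨j, hj, hne⟩ := hN i hi
      exact ⟨j, hj, by simpa [shift_iterate_apply] using hne⟩
    have := Filter.le_liminf_of_le ((hb z).isCoboundedUnder_ge) hev
    exact lt_of_lt_of_le (by positivity) this

theorem liminf_nonneg (hK : 2 ≤ K) (z : SymbSp K × SymbSp K) :
    0 ≤ Filter.liminf (fun i : ℕ => dist ((shift K)^[i] z.1) ((shift K)^[i] z.2))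
      Filter.atTop := by
  refine Filter.le_liminf_of_le ?_ (Filter.Eventually.of_forall fun i => dist_nonneg)
  exact (Filter.isBoundedUnder_of ⟨1, fun i => sdist_le_one hK _ _⟩).isCoboundedUnder_ge

theorem proxSet_eq_compl (hK : 2 ≤ K) : ProxSet K = (DistSet K)ᶜ := by
  ext z
  simp only [ProxSet, DistSet, Set.mem_setOf_eq, Set.mem_compl_iff, not_lt]
  constructor
  · intro h; rw [h]
  · intro h; exact le_antisymm h (liminf_nonneg hK z)

/-- Coordinate-value sets are open. -/
theorem isOpen_coord (hK : 2 ≤ K) (n : ℕ) (v : Fin K) :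
    IsOpen {x : SymbSp K | x n = v} := by
  rw [Metric.isOpen_iff]
  intro x hx
  refine ⟨((K:ℝ))⁻¹ ^ n, by positivity, fun y hy => ?_⟩
  rw [Metric.mem_ball, symb_dist_eq, sdist_comm] at hy
  have := agree_of_sdist_lt hK hy n le_rfl
  simp only [Set.mem_setOf_eq] at hx ⊢
  rw [← this, hx]

theorem measurable_eset (hK : 2 ≤ K) (m N : ℕ) : MeasurableSet (Eset K m N) := by
  have : Eset K m N = ⋂ i, ⋂ (_ : N ≤ i), ⋃ j, ⋃ (_ : j < m),
      ({z : SymbSp K × SymbSp K | z.1 (j+i) = z.2 (j+i)})ᶜ := by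
    ext z
    simp [Eset]
  rw [this]
  refine MeasurableSet.iInter fun i => MeasurableSet.iInter fun _ =>
    MeasurableSet.iUnion fun j => MeasurableSet.iUnion fun _ => (MeasurableSet.compl ?_)
  have : {z : SymbSp K × SymbSp K | z.1 (j+i) = z.2 (j+i)} =
      ⋃ v : Fin K, (Prod.fst ⁻¹' {x : SymbSp K | x (j+i) = v}) ∩
        (Prod.snd ⁻¹' {x : SymbSp K | x (j+i) = v}) := by
    ext z
    simp only [Set.mem_setOf_eq, Set.mem_iUnion, Set.mem_inter_iff, Set.mem_preimage]
    constructor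
    · intro h; exact ⟨z.2 (j+i), h, rfl⟩
    · rintro ⟨v, h1, h2⟩; rw [h1, h2]
  rw [this]
  refine MeasurableSet.iUnion fun v => MeasurableSet.inter ?_ ?_
  · exact ((isOpen_coord hK _ v).preimage continuous_fst).measurableSet
  · exact ((isOpen_coord hK _ v).preimage continuous_snd).measurableSet

theorem measurable_distSet (hK : 2 ≤ K) : MeasurableSet (DistSet K) := by
  rw [distSet_eq_iUnion hK]
  exact MeasurableSet.iUnion fun m => MeasurableSet.iUnion fun N => measurable_eset hK m N

end SymbS75

namespace SymbS75

open SymbSp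

variable {K : ℕ}

/-- The base-`K` expansion map to `[0,1]`. -/
noncomputable def gmap (K : ℕ) (x : SymbSp K) : ℝ := ∑' i, ((x i : ℕ) : ℝ) * ((K:ℝ))⁻¹ ^ (i+1)

theorem coord_le (hK : 2 ≤ K) (v : Fin K) : ((v : ℕ) : ℝ) ≤ (K:ℝ) - 1 := by
  have h1 : ((v : ℕ) : ℝ) + 1 ≤ (K:ℝ) := by
    exact_mod_cast Nat.succ_le_of_lt v.isLt
  linarith

theorem gmap_term_bound (hK : 2 ≤ K) (x : SymbSp K) (i : ℕ) :
    |((x i : ℕ) : ℝ) * ((K:ℝ))⁻¹ ^ (i+1)| ≤ ((K:ℝ) - 1) * ((K:ℝ))⁻¹ ^ (i+1) := by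
  rw [abs_of_nonneg (by positivity)]
  exact mul_le_mul_of_nonneg_right (coord_le hK (x i)) (by positivity)

theorem summable_gmap_aux (hK : 2 ≤ K) : Summable (fun i : ℕ => ((K:ℝ) - 1) * ((K:ℝ))⁻¹ ^ (i+1)) := by
  have h := (summable_geometric_of_lt_one (invK_pos hK).le (invK_lt_one hK)).mul_left
    (((K:ℝ) - 1) * ((K:ℝ))⁻¹)
  exact h.congr (fun i => by rw [pow_succ]; ring)

theorem summable_gmap (hK : 2 ≤ K) (x : SymbSp K) :
    Summable (fun i : ℕ => ((x i : ℕ) : ℝ) * ((K:ℝ))⁻¹ ^ (i+1)) := by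
  apply Summable.of_nonneg_of_le (fun i => by positivity) (fun i => ?_) (summable_gmap_aux hK)
  have := gmap_term_bound hK x i
  rwa [abs_of_nonneg (by positivity)] at this

theorem geom_tail (hK : 2 ≤ K) (d : ℕ) :
    ∑' i : ℕ, ((K:ℝ) - 1) * ((K:ℝ))⁻¹ ^ (i + d + 1) = ((K:ℝ))⁻¹ ^ d := by
  have hK0 : (0:ℝ) < (K:ℝ) := by exact_mod_cast (by omega : 0 < K)
  have hc1 : (K:ℝ)⁻¹ < 1 := invK_lt_one hK
  have hsum : ∑' i : ℕ, ((K:ℝ))⁻¹ ^ i = (1 - (K:ℝ)⁻¹)⁻¹ :=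
    tsum_geometric_of_lt_one (invK_pos hK).le hc1
  have : ∀ i : ℕ, ((K:ℝ) - 1) * ((K:ℝ))⁻¹ ^ (i + d + 1)
      = (((K:ℝ) - 1) * ((K:ℝ))⁻¹ ^ (d + 1)) * ((K:ℝ))⁻¹ ^ i := by
    intro i; rw [pow_add, pow_add]; ring
  rw [tsum_congr this, tsum_mul_left, hsum]
  have h1 : (1 - (K:ℝ)⁻¹) = ((K:ℝ) - 1) / K := by field_simp
  rw [h1]
  rw [pow_succ]
  have hKne : (K:ℝ) ≠ 0 := ne_of_gt hK0
  have hK1 : (K:ℝ) - 1 ≠ 0 := by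
    have : (1:ℝ) < K := by exact_mod_cast (by omega : 1 < K)
    linarith
  field_simp

theorem gmap_lipschitz (hK : 2 ≤ K) : LipschitzWith 1 (gmap K) := by
  apply LipschitzWith.of_dist_le_mul
  intro x y
  rw [NNReal.coe_one, one_mul]
  by_cases hxy : x = y
  · rw [hxy]; simp
  have hfind := Nat.find_spec (exists_ne hxy)
  set d := Nat.find (exists_ne hxy) with hd
  have hdist : dist x y = ((K:ℝ))⁻¹ ^ d := sdist_eq hxy
  rw [Real.dist_eq, hdist]
  have hsml : Summable (fun i : ℕ => (((x i : ℕ) : ℝ) - ((y i : ℕ) : ℝ)) * ((K:ℝ))⁻¹ ^ (i+1)) := by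
    have := (summable_gmap hK x).sub (summable_gmap hK y)
    exact this.congr (fun i => by ring)
  have hgd : gmap K x - gmap K y
      = ∑' i, (((x i : ℕ) : ℝ) - ((y i : ℕ) : ℝ)) * ((K:ℝ))⁻¹ ^ (i+1) := by
    rw [gmap, gmap, ← Summable.tsum_sub (summable_gmap hK x) (summable_gmap hK y)]
    exact tsum_congr (fun i => by ring)
  have hsplit := Summable.sum_add_tsum_nat_add (f := fun i : ℕ =>
    (((x i : ℕ) : ℝ) - ((y i : ℕ) : ℝ)) * ((K:ℝ))⁻¹ ^ (i+1)) d hsml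
  have hzero : ∑ i ∈ Finset.range d, (((x i : ℕ) : ℝ) - ((y i : ℕ) : ℝ)) * ((K:ℝ))⁻¹ ^ (i+1) = 0 := by
    apply Finset.sum_eq_zero
    intro i hi
    rw [Finset.mem_range] at hi
    rw [eq_of_lt_find hxy hi]
    ring
  rw [hgd, ← hsplit, hzero, zero_add]
  calc |∑' i, (((x (i+d) : ℕ) : ℝ) - ((y (i+d) : ℕ) : ℝ)) * ((K:ℝ))⁻¹ ^ (i+d+1)|
      ≤ ∑' i, |(((x (i+d) : ℕ) : ℝ) - ((y (i+d) : ℕ) : ℝ))| * ((K:ℝ))⁻¹ ^ (i+d+1) := by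
        have hFs : Summable (fun i : ℕ =>
            |(((x (i+d) : ℕ) : ℝ) - ((y (i+d) : ℕ) : ℝ))| * ((K:ℝ))⁻¹ ^ (i+d+1)) := by
          have := (hsml.comp_injective (add_left_injective d)).abs
          exact this.congr (fun i => by
            simp [Function.comp, abs_mul, abs_pow, abs_inv, Nat.abs_cast])
        have hn := norm_tsum_le_tsum_norm (f := fun i : ℕ =>
            (((x (i+d) : ℕ) : ℝ) - ((y (i+d) : ℕ) : ℝ)) * ((K:ℝ))⁻¹ ^ (i+d+1))
          (by simpa [Real.norm_eq_abs] using hFs)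
        simpa [Real.norm_eq_abs] using hn
    _ ≤ ∑' i : ℕ, ((K:ℝ) - 1) * ((K:ℝ))⁻¹ ^ (i+d+1) := by
        apply Summable.tsum_le_tsum _ _ ((summable_gmap_aux hK).comp_injective
          (add_left_injective d) |>.congr (fun i => rfl))
        · intro i
          refine mul_le_mul_of_nonneg_right ?_ (by positivity)
          have hx := (x (i+d)).isLt
          have hy := (y (i+d)).isLt
          rw [abs_sub_le_iff]
          constructor
          · have := coord_le hK (x (i+d))
            have h0 : (0:ℝ) ≤ ((y (i+d) : ℕ) : ℝ) := by positivity
            linarith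
          · have := coord_le hK (y (i+d))
            have h0 : (0:ℝ) ≤ ((x (i+d) : ℕ) : ℝ) := by positivity
            linarith
        · exact ((hsml.comp_injective (add_left_injective d)).abs).congr
            (fun i => by simp [Function.comp, abs_mul, abs_pow, abs_inv, Nat.abs_cast])
    _ = ((K:ℝ))⁻¹ ^ d := geom_tail hK d

end SymbS75

namespace SymbS75

open SymbSp

variable {K : ℕ}

theorem gmap_surj (hK : 2 ≤ K) : Set.Ico (0:ℝ) 1 ⊆ gmap K '' Set.univ := by
  rintro t ⟨ht0, ht1⟩
  have hK0 : (0:ℝ) < (K:ℝ) := by exact_mod_cast (by omega : 0 < K)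
  have hKne : (K:ℝ) ≠ 0 := ne_of_gt hK0
  set F : ℕ → ℤ := fun n => ⌊t * (K:ℝ)^n⌋ with hF
  have hF0 : F 0 = 0 := by
    simp only [hF, pow_zero, mul_one]
    exact Int.floor_eq_zero_iff.mpr ⟨ht0, ht1⟩
  have hlow : ∀ n, (K:ℤ) * F n ≤ F (n+1) := by
    intro n
    apply Int.le_floor.mpr
    push_cast
    calc (K:ℝ) * ⌊t * (K:ℝ)^n⌋ ≤ (K:ℝ) * (t * (K:ℝ)^n) :=
        mul_le_mul_of_nonneg_left (Int.floor_le _) hK0.le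
    _ = t * (K:ℝ)^(n+1) := by ring
  have hhigh : ∀ n, F (n+1) < (K:ℤ) * F n + K := by
    intro n
    apply Int.floor_lt.mpr
    push_cast
    calc t * (K:ℝ)^(n+1) = (K:ℝ) * (t * (K:ℝ)^n) := by ring
    _ < (K:ℝ) * (⌊t * (K:ℝ)^n⌋ + 1) :=
        mul_lt_mul_of_pos_left (Int.lt_floor_add_one _) hK0
    _ = (K:ℝ) * ⌊t * (K:ℝ)^n⌋ + K := by push_cast; ring
  have hdig : ∀ n, (F (n+1) - (K:ℤ) * F n).toNat < K := by
    intro n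
    have h1 := hlow n
    have h2 := hhigh n
    omega
  set x : SymbSp K := fun n => ⟨(F (n+1) - (K:ℤ) * F n).toNat, hdig n⟩ with hx
  have hxval : ∀ n, ((x n : ℕ) : ℤ) = F (n+1) - (K:ℤ) * F n := by
    intro n
    simp only [hx]
    exact Int.toNat_of_nonneg (by linarith [hlow n])
  refine ⟨x, Set.mem_univ x, ?_⟩
  have hps : ∀ n, ∑ i ∈ Finset.range n, ((x i : ℕ) : ℝ) * ((K:ℝ))⁻¹ ^ (i+1)
      = (F n : ℝ) / (K:ℝ)^n := by
    intro n
    induction n with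
    | zero => simp [hF0]
    | succ n ih =>
      rw [Finset.sum_range_succ, ih]
      have hxr : ((x n : ℕ) : ℝ) = (F (n+1) : ℝ) - (K:ℝ) * (F n : ℝ) := by
        exact_mod_cast hxval n
      rw [hxr]
      simp only [inv_pow]
      field_simp
      ring
  have htend : Filter.Tendsto (fun n => ∑ i ∈ Finset.range n,
      ((x i : ℕ) : ℝ) * ((K:ℝ))⁻¹ ^ (i+1)) Filter.atTop (nhds t) := by
    rw [tendsto_iff_dist_tendsto_zero]
    apply squeeze_zero (fun n => dist_nonneg) (g := fun n => ((K:ℝ))⁻¹ ^ n)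
    · intro n
      rw [hps n, Real.dist_eq]
      have h1 : ((F n : ℤ) : ℝ) ≤ t * (K:ℝ)^n := Int.floor_le _
      have h2 : t * (K:ℝ)^n < ((F n : ℤ) : ℝ) + 1 := Int.lt_floor_add_one _
      have hp : (0:ℝ) < (K:ℝ)^n := by positivity
      have e1 : (F n : ℝ) / (K:ℝ)^n - t = ((F n : ℝ) - t * (K:ℝ)^n) / (K:ℝ)^n := by
        field_simp
      rw [e1, abs_div, abs_of_pos hp, abs_of_nonpos (by linarith), inv_pow,
        inv_eq_one_div, div_le_div_iff₀ hp hp]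
      nlinarith
    · exact tendsto_pow_atTop_nhds_zero_of_lt_one (invK_pos hK).le (invK_lt_one hK)
  have hsum := (summable_gmap hK x).hasSum.tendsto_sum_nat
  exact (tendsto_nhds_unique hsum htend).symm ▸ rfl

end SymbS75

namespace SymbS75

open SymbSp MeasureTheory
open scoped ENNReal NNReal

variable {K : ℕ}

theorem one_le_hausdorff_univ (hK : 2 ≤ K) :
    1 ≤ μH[1] (Set.univ : Set (SymbSp K)) := by
  have himg := (gmap_lipschitz hK).hausdorffMeasure_image_le
    (zero_le_one) (Set.univ : Set (SymbSp K))
  simp only [ENNReal.coe_one, ENNReal.one_rpow, one_mul] at himg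
  calc (1:ℝ≥0∞) = volume (Set.Ico (0:ℝ) 1) := by simp
  _ ≤ volume (gmap K '' Set.univ) := measure_mono (gmap_surj hK)
  _ = μH[1] (gmap K '' Set.univ) := by rw [MeasureTheory.hausdorffMeasure_real]
  _ ≤ μH[1] (Set.univ : Set (SymbSp K)) := himg

/-- The pair coding map to `ℝ × ℝ`. -/
noncomputable def gmap2 (K : ℕ) (z : SymbSp K × SymbSp K) : ℝ × ℝ := (gmap K z.1, gmap K z.2)

theorem gmap2_lipschitz (hK : 2 ≤ K) : LipschitzWith 1 (gmap2 K) := by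
  apply LipschitzWith.of_dist_le_mul
  intro z w
  rw [NNReal.coe_one, one_mul, Prod.dist_eq, Prod.dist_eq]
  apply max_le_max
  · have := (gmap_lipschitz hK).dist_le_mul z.1 w.1
    simp at this; exact this
  · have := (gmap_lipschitz hK).dist_le_mul z.2 w.2
    simp at this; exact this

theorem one_le_hausdorff2_univ (hK : 2 ≤ K) :
    1 ≤ μH[2] (Set.univ : Set (SymbSp K × SymbSp K)) := by
  have himg := (gmap2_lipschitz hK).hausdorffMeasure_image_le
    (by norm_num : (0:ℝ) ≤ 2) (Set.univ : Set (SymbSp K × SymbSp K))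
  simp only [ENNReal.coe_one, ENNReal.one_rpow, one_mul] at himg
  have hsub : Set.Ico (0:ℝ) 1 ×ˢ Set.Ico (0:ℝ) 1 ⊆ gmap2 K '' Set.univ := by
    rintro ⟨s, t⟩ ⟨hs, ht⟩
    obtain ⟨a, -, ha⟩ := gmap_surj hK hs
    obtain ⟨b, -, hb⟩ := gmap_surj hK ht
    exact ⟨(a, b), Set.mem_univ _, by simp [gmap2, ha, hb]⟩
  calc (1:ℝ≥0∞) = volume (Set.Ico (0:ℝ) 1 ×ˢ Set.Ico (0:ℝ) 1) := by
        rw [MeasureTheory.Measure.volume_eq_prod, MeasureTheory.Measure.prod_prod]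
        simp
  _ ≤ volume (gmap2 K '' Set.univ) := measure_mono hsub
  _ = μH[2] (gmap2 K '' Set.univ) := by rw [MeasureTheory.hausdorffMeasure_prod_real]
  _ ≤ μH[2] (Set.univ : Set (SymbSp K × SymbSp K)) := himg

/-- Pair cylinders. -/
def pcyl {K L : ℕ} (q : (Fin L → Fin K) × (Fin L → Fin K)) : Set (SymbSp K × SymbSp K) :=
  {z | (∀ i : Fin L, z.1 i = q.1 i) ∧ (∀ i : Fin L, z.2 i = q.2 i)}

theorem diam_pcyl (hK : 2 ≤ K) {L : ℕ} (q : (Fin L → Fin K) × (Fin L → Fin K)) :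
    EMetric.diam (pcyl q) ≤ ENNReal.ofReal (((K:ℝ))⁻¹ ^ L) := by
  apply EMetric.diam_le
  intro z hz w hw
  rw [edist_dist]
  apply ENNReal.ofReal_le_ofReal
  rw [Prod.dist_eq]
  apply max_le
  · rw [symb_dist_eq]
    exact sdist_le_of_agree (fun i hi => by rw [hz.1 ⟨i, hi⟩, hw.1 ⟨i, hi⟩])
  · rw [symb_dist_eq]
    exact sdist_le_of_agree (fun i hi => by rw [hz.2 ⟨i, hi⟩, hw.2 ⟨i, hi⟩])

/-- Generic covering upper bound for Hausdorff measure on the pair space. -/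
theorem cover_bound (hK : 2 ≤ K) (d : ℝ) (hd : 0 ≤ d) (s : Set (SymbSp K × SymbSp K))
    (L : ℕ → ℕ) (hL : Filter.Tendsto L Filter.atTop Filter.atTop)
    (ι : ℕ → Type) [∀ n, Fintype (ι n)]
    (p : ∀ n, ι n → ((Fin (L n) → Fin K) × (Fin (L n) → Fin K)))
    (hcov : ∀ n, s ⊆ ⋃ i, pcyl (p n i))
    (B : ℕ → ℝ) (hB : ∀ n, (Fintype.card (ι n) : ℝ) * (((K:ℝ))⁻¹ ^ (L n)) ^ d ≤ B n)
    {A : ℝ} (hA : Filter.Tendsto B Filter.atTop (nhds A)) :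
    μH[d] s ≤ ENNReal.ofReal A := by
  have hc0 : (0:ℝ) ≤ (K:ℝ)⁻¹ := (invK_pos hK).le
  have h := MeasureTheory.Measure.hausdorffMeasure_le_liminf_sum d s
    (fun n => ENNReal.ofReal (((K:ℝ))⁻¹ ^ (L n)))
    (by
      have : Filter.Tendsto (fun n : ℕ => ((K:ℝ))⁻¹ ^ (L n)) Filter.atTop (nhds 0) :=
        (tendsto_pow_atTop_nhds_zero_of_lt_one hc0 (invK_lt_one hK)).comp hL
      simpa using ENNReal.tendsto_ofReal this)
    (fun n i => pcyl (p n i))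
    (Filter.Eventually.of_forall fun n i => diam_pcyl hK (p n i))
    (Filter.Eventually.of_forall hcov)
  refine h.trans ?_
  have hstep : ∀ n : ℕ, ∑ i, EMetric.diam (pcyl (p n i)) ^ d ≤ ENNReal.ofReal (B n) := by
    intro n
    calc ∑ i, EMetric.diam (pcyl (p n i)) ^ d
        ≤ Finset.univ.card • (ENNReal.ofReal (((K:ℝ))⁻¹ ^ (L n)) ^ d) := by
          apply Finset.sum_le_card_nsmul
          intro i _
          exact ENNReal.rpow_le_rpow (diam_pcyl hK (p n i)) hd
      _ = (Fintype.card (ι n) : ℝ≥0∞) * ENNReal.ofReal ((((K:ℝ))⁻¹ ^ (L n)) ^ d) := by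
          rw [nsmul_eq_mul, Finset.card_univ,
            ENNReal.ofReal_rpow_of_nonneg (by positivity) hd]
      _ = ENNReal.ofReal ((Fintype.card (ι n) : ℝ) * (((K:ℝ))⁻¹ ^ (L n)) ^ d) := by
          rw [ENNReal.ofReal_mul (by positivity), ENNReal.ofReal_natCast]
      _ ≤ ENNReal.ofReal (B n) := ENNReal.ofReal_le_ofReal (hB n)
  calc Filter.liminf (fun n => ∑ i, EMetric.diam (pcyl (p n i)) ^ d) Filter.atTop
      ≤ Filter.liminf (fun n => ENNReal.ofReal (B n)) Filter.atTop :=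
        Filter.liminf_le_liminf (Filter.Eventually.of_forall hstep)
    _ = ENNReal.ofReal A := (ENNReal.tendsto_ofReal hA).liminf_eq

end SymbS75

namespace SymbS75

open SymbSp MeasureTheory
open scoped ENNReal NNReal

variable {K : ℕ}

theorem rpow_two_eq (x : ℝ) : x ^ (2:ℝ) = x ^ (2:ℕ) := by
  rw [← Real.rpow_natCast x 2]
  norm_num

theorem hausdorff2_univ_le (hK : 2 ≤ K) :
    μH[2] (Set.univ : Set (SymbSp K × SymbSp K)) ≤ 1 := by
  have hKne : (K:ℝ) ≠ 0 := by
    have : (0:ℝ) < K := by exact_mod_cast (by omega : 0 < K)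
    exact ne_of_gt this
  have h := cover_bound hK 2 (by norm_num) Set.univ id Filter.tendsto_id
    (fun n => (Fin n → Fin K) × (Fin n → Fin K))
    (fun n q => q)
    (fun n => by
      intro z _
      exact Set.mem_iUnion.mpr ⟨(fun i => z.1 i, fun i => z.2 i), ⟨fun i => rfl, fun i => rfl⟩⟩)
    (fun _ => 1)
    (fun n => by
      simp only [id_eq]
      rw [rpow_two_eq]
      have hcard : Fintype.card ((Fin n → Fin K) × (Fin n → Fin K)) = K ^ n * K ^ n := by
        simp [Fintype.card_fun]
      rw [hcard]
      push_cast
      rw [inv_pow]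
      rw [show (((K:ℝ)^n)⁻¹)^(2:ℕ) = (((K:ℝ)^n)*((K:ℝ)^n))⁻¹ by rw [mul_inv]; ring]
      rw [mul_inv_le_iff₀ (by positivity), one_mul])
    tendsto_const_nhds
  simpa using h

theorem hausdorff2_aset (hK : 2 ≤ K) (N : ℕ) : μH[2] (Aset K N) = 0 := by
  have hKne : (K:ℝ) ≠ 0 := by
    have : (0:ℝ) < K := by exact_mod_cast (by omega : 0 < K)
    exact ne_of_gt this
  have hKc : (K:ℝ) * (K:ℝ)⁻¹ = 1 := mul_inv_cancel₀ hKne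
  have h := cover_bound hK 2 (by norm_num) (Aset K N) (fun n => N + n)
    (Filter.tendsto_atTop_mono (fun n => Nat.le_add_left n N) Filter.tendsto_id)
    (fun n => (Fin (N + n) → Fin K) × (Fin N → Fin K))
    (fun n q => (q.1, fun i => if h : (i:ℕ) < N then q.2 ⟨i, h⟩ else q.1 i))
    (fun n => by
      intro z hz
      refine Set.mem_iUnion.mpr ⟨(fun i => z.1 i, fun i => z.2 i), ⟨fun i => rfl, fun i => ?_⟩⟩
      by_cases h : (i:ℕ) < N
      · simp [h]
      · simp only [h, dif_neg, not_false_iff]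
        exact (hz i (by omega)).symm)
    (fun n => ((K:ℝ))⁻¹ ^ n)
    (fun n => by
      rw [rpow_two_eq]
      have hcard : Fintype.card ((Fin (N+n) → Fin K) × (Fin N → Fin K))
          = K ^ (N+n) * K ^ N := by simp [Fintype.card_fun]
      rw [hcard]
      push_cast
      apply le_of_eq
      rw [inv_pow]
      simp only [inv_pow]
      field_simp
      ring)
    (tendsto_pow_atTop_nhds_zero_of_lt_one (invK_pos hK).le (invK_lt_one hK))
  simpa using h

end SymbS75

namespace SymbS75

open SymbSp MeasureTheory
open scoped ENNReal NNReal

/-- Position of coordinate `j` in block `b` after prefix `N`. -/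
def bpos (N m n : ℕ) (b : Fin n) (j : Fin m) : Fin (N + n * m) :=
  ⟨N + (b:ℕ) * m + (j:ℕ), by
    have h1 : (b:ℕ) * m + m ≤ n * m := by
      calc (b:ℕ) * m + m = ((b:ℕ) + 1) * m := by ring
      _ ≤ n * m := Nat.mul_le_mul_right m b.isLt
    have h2 := j.isLt
    omega⟩

theorem hausdorff2_eset {K : ℕ} (hK : 2 ≤ K) (m N : ℕ) (hm : 1 ≤ m) :
    μH[2] (Eset K m N) = 0 := by
  obtain ⟨k, rfl⟩ : ∃ k, K = k + 2 := ⟨K - 2, by omega⟩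
  set K := k + 2 with hKdef
  have hKne : (K:ℝ) ≠ 0 := by positivity
  have hc0 : (0:ℝ) ≤ (K:ℝ)⁻¹ := (invK_pos hK).le
  have hc1 : ((K:ℝ))⁻¹ < 1 := invK_lt_one hK
  have hcm1 : ((K:ℝ))⁻¹ ^ m ≤ 1 := pow_le_one₀ hc0 (inv_cast_le_one K)
  have hcm0 : (0:ℝ) < ((K:ℝ))⁻¹ ^ m := by positivity
  have hKc : ∀ a : ℕ, (K:ℝ)^a * ((K:ℝ))⁻¹^a = 1 := fun a => by
    rw [← mul_pow, mul_inv_cancel₀ hKne, one_pow]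
  have h := cover_bound hK 2 (by norm_num) (Eset K m N) (fun n => N + n * m)
    (Filter.tendsto_atTop_mono (fun n => by
      calc n = n * 1 := (mul_one n).symm
      _ ≤ n * m := Nat.mul_le_mul_left n hm
      _ ≤ N + n * m := Nat.le_add_left _ _)
      Filter.tendsto_id)
    (fun n => {q : (Fin (N + n * m) → Fin K) × (Fin (N + n * m) → Fin K) //
      ∀ b : Fin n, ∃ j : Fin m, q.1 (bpos N m n b j) ≠ q.2 (bpos N m n b j)})
    (fun n q => q.1)
    (fun n => by
      intro z hz
      have hadm : ∀ b : Fin n, ∃ j : Fin m,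
          z.1 ((bpos N m n b j : ℕ)) ≠ z.2 ((bpos N m n b j : ℕ)) := by
        intro b
        obtain ⟨j, hj, hne⟩ := hz (N + (b:ℕ) * m) (Nat.le_add_right N _)
        refine ⟨⟨j, hj⟩, ?_⟩
        have : ((bpos N m n b ⟨j, hj⟩ : Fin (N + n*m)) : ℕ) = j + (N + (b:ℕ) * m) := by
          simp [bpos]; omega
        rw [this]
        exact hne
      exact Set.mem_iUnion.mpr ⟨⟨(fun i => z.1 i, fun i => z.2 i), hadm⟩,
        ⟨fun i => rfl, fun i => rfl⟩⟩)
    (fun n => (1 - ((K:ℝ))⁻¹ ^ m) ^ n)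
    (fun n => by
      rw [rpow_two_eq]
      -- counting via an injection
      have hmn0 : 0 < m := hm
      let T := (Fin (N + n * m) → Fin K) × ((Fin N → Fin K) ×
        (Fin n → {w : Fin m → Fin K // w ≠ 0}))
      have hinj : ∃ Φ : {q : (Fin (N + n * m) → Fin K) × (Fin (N + n * m) → Fin K) //
          ∀ b : Fin n, ∃ j : Fin m, q.1 (bpos N m n b j) ≠ q.2 (bpos N m n b j)} → T,
          Function.Injective Φ := by
        refine ⟨fun q => ⟨q.1.1, fun i => q.1.2 ⟨i, by omega⟩, fun b =>
          ⟨fun j => q.1.2 (bpos N m n b j) - q.1.1 (bpos N m n b j), ?_⟩⟩, ?_⟩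
        · obtain ⟨j, hj⟩ := q.2 b
          intro hzero
          have := congrFun hzero j
          simp only [Pi.zero_apply] at this
          exact hj (sub_eq_zero.mp this).symm
        · intro a b heq
          have h1 := congrArg (fun t : T => t.1) heq
          have h2 := congrArg (fun t : T => t.2.1) heq
          have h3 := congrArg (fun t : T => t.2.2) heq
          simp only at h1 h2 h3
          apply Subtype.ext
          refine Prod.ext h1 (funext fun i => ?_)
          rcases lt_or_ge (i:ℕ) N with hi | hi
          · have h2' := congrFun h2 ⟨(i:ℕ), hi⟩
            simpa using h2'
          · have hb : ((i:ℕ) - N) / m < n := by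
              apply (Nat.div_lt_iff_lt_mul hmn0).mpr
              have := i.isLt
              omega
            have hj : ((i:ℕ) - N) % m < m := Nat.mod_lt _ hmn0
            have hpos : (bpos N m n ⟨_, hb⟩ ⟨_, hj⟩ : Fin (N + n * m)) = i := by
              apply Fin.ext
              simp only [bpos]
              have := Nat.div_add_mod ((i:ℕ) - N) m
              have hmc : ((i:ℕ) - N) / m * m = m * (((i:ℕ) - N) / m) := Nat.mul_comm _ _
              omega
            have h3b := congrFun h3 ⟨_, hb⟩
            rw [Subtype.ext_iff] at h3b
            have h3bj := congrFun h3b ⟨_, hj⟩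
            simp only at h3bj
            rw [hpos] at h3bj
            have h1i := congrFun h1 (i : Fin (N + n * m))
            rw [h1i] at h3bj
            exact sub_left_inj.mp h3bj
      obtain ⟨Φ, hΦ⟩ := hinj
      have hsub : Fintype.card {w : Fin m → Fin K // w ≠ 0} = K ^ m - 1 := by
        have hcc := Fintype.card_subtype_compl (fun w : Fin m → Fin K => w = 0)
        have h1 : Fintype.card {w : Fin m → Fin K // w = 0} = 1 :=
          Fintype.card_subtype_eq (0 : Fin m → Fin K)
        have h2 : Fintype.card (Fin m → Fin K) = K ^ m := by simp [Fintype.card_fun]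
        rw [h1, h2] at hcc
        exact hcc
      have hcard : Fintype.card {q : (Fin (N + n * m) → Fin K) × (Fin (N + n * m) → Fin K) //
          ∀ b : Fin n, ∃ j : Fin m, q.1 (bpos N m n b j) ≠ q.2 (bpos N m n b j)}
          ≤ K ^ (N + n * m) * (K ^ N * (K ^ m - 1) ^ n) := by
        have := Fintype.card_le_of_injective Φ hΦ
        have hTc : Fintype.card T = K ^ (N + n * m) * (K ^ N * (K ^ m - 1) ^ n) := by
          simp only [T, Fintype.card_prod, Fintype.card_fun, Fintype.card_fin, hsub]
        rwa [hTc] at this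
      have hcardR : (Fintype.card {q : (Fin (N + n * m) → Fin K) × (Fin (N + n * m) → Fin K) //
          ∀ b : Fin n, ∃ j : Fin m, q.1 (bpos N m n b j) ≠ q.2 (bpos N m n b j)} : ℝ)
          ≤ (K:ℝ) ^ (N + n * m) * ((K:ℝ) ^ N * ((K:ℝ) ^ m - 1) ^ n) := by
        have hk1 : 1 ≤ K ^ m := Nat.one_le_pow _ _ (by omega)
        calc (Fintype.card _ : ℝ) ≤ ((K ^ (N + n * m) * (K ^ N * (K ^ m - 1) ^ n) : ℕ) : ℝ) := by
              exact_mod_cast hcard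
        _ = (K:ℝ) ^ (N + n * m) * ((K:ℝ) ^ N * ((K:ℝ) ^ m - 1) ^ n) := by
              push_cast [Nat.cast_sub hk1]
              ring
      calc (Fintype.card {q : (Fin (N + n * m) → Fin K) × (Fin (N + n * m) → Fin K) //
          ∀ b : Fin n, ∃ j : Fin m, q.1 (bpos N m n b j) ≠ q.2 (bpos N m n b j)} : ℝ)
            * (((K:ℝ))⁻¹ ^ (N + n * m)) ^ (2:ℕ)
          ≤ ((K:ℝ) ^ (N + n * m) * ((K:ℝ) ^ N * ((K:ℝ) ^ m - 1) ^ n))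
            * (((K:ℝ))⁻¹ ^ (N + n * m)) ^ (2:ℕ) := by gcongr
        _ = (1 - ((K:ℝ))⁻¹ ^ m) ^ n := by
              have h1m : (1:ℝ) - ((K:ℝ))⁻¹ ^ m = ((K:ℝ) ^ m - 1) * ((K:ℝ))⁻¹ ^ m := by
                rw [sub_mul, hKc, one_mul]
              rw [h1m, mul_pow]
              simp only [inv_pow]
              field_simp
              ring)
    (tendsto_pow_atTop_nhds_zero_of_lt_one (by linarith) (by linarith))
  simpa using h

end SymbS75

namespace SymbS75

open SymbSp MeasureTheory
open scoped ENNReal NNReal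

variable {K : ℕ}

theorem sdist_congr {x y x' y' : SymbSp K} (h : ∀ i, x i = y i ↔ x' i = y' i) :
    sdist x y = sdist x' y' := by
  by_cases hxy : x = y
  · have : x' = y' := funext fun i => (h i).mp (congrFun hxy i)
    rw [hxy, this, sdist_self, sdist_self]
  · have hxy' : ¬ x' = y' := by
      intro hc
      exact hxy (funext fun i => (h i).mpr (congrFun hc i))
    rw [sdist_eq hxy, sdist_eq hxy']
    congr 1
    apply le_antisymm
    · apply Nat.find_min' (exists_ne hxy)
      intro hc
      exact Nat.find_spec (exists_ne hxy') ((h _).mp hc)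
    · apply Nat.find_min' (exists_ne hxy')
      intro hc
      exact Nat.find_spec (exists_ne hxy) ((h _).mpr hc)

theorem hausdorff1_asym (hK : 2 ≤ K) : μH[1] (AsymSet K) = ⊤ := by
  obtain ⟨k, rfl⟩ : ∃ k, K = k + 2 := ⟨K - 2, by omega⟩
  set K := k + 2 with hKdef
  -- the flip maps
  let flip : ℕ → SymbSp K → SymbSp K := fun n x i => if i = n then x i + 1 else x i
  have flip_iff : ∀ n (x y : SymbSp K) i, x i = y i ↔ flip n x i = flip n y i := by
    intro n x y i
    by_cases h : i = n <;> simp [flip, h]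
  have flip_dist : ∀ n (x y : SymbSp K), dist (flip n x) (flip n y) = dist x y := by
    intro n x y
    rw [symb_dist_eq, symb_dist_eq]
    exact (sdist_congr (fun i => (flip_iff n x y i))).symm
  have flip_cont : ∀ n, Continuous (flip n) := by
    intro n
    exact (Isometry.of_dist_eq (flip_dist n)).continuous
  let S : ℕ → Set (SymbSp K × SymbSp K) := fun n => {z | z.2 = flip n z.1}
  have hS_closed : ∀ n, IsClosed (S n) :=
    fun n => isClosed_eq continuous_snd ((flip_cont n).comp continuous_fst)
  have hS_sub : ∀ n, S n ⊆ AsymSet K := by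
    intro n
    refine Set.Subset.trans ?_ (aset_subset_asym hK (n+1))
    intro z hz i hi
    have : flip n z.1 i = z.1 i := by
      simp only [flip, if_neg (by omega : ¬ i = n)]
    rw [Set.mem_setOf_eq] at hz
    rw [hz, this]
  have hS_disj : Pairwise (Function.onFun Disjoint S) := by
    intro n n' hnn
    rw [Function.onFun, Set.disjoint_left]
    intro z hz hz'
    have h1 : flip n z.1 n = z.1 n + 1 := by simp [flip]
    have h2 : flip n' z.1 n = z.1 n := by simp [flip, hnn]
    rw [Set.mem_setOf_eq] at hz hz'
    have : z.1 n + 1 = z.1 n := by rw [← h1, ← hz, hz', h2]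
    have h10 : (1 : Fin K) = 0 := by
      have := add_eq_left.mp this
      exact this
    exact one_ne_zero h10
  have hS_ge : ∀ n, 1 ≤ μH[1] (S n) := by
    intro n
    have himg : Prod.fst '' (S n) = (Set.univ : Set (SymbSp K)) := by
      apply Set.eq_univ_of_forall
      intro x
      exact ⟨(x, flip n x), rfl, rfl⟩
    have hlip := (LipschitzWith.prod_fst (α := SymbSp K) (β := SymbSp K)).hausdorffMeasure_image_le
      (zero_le_one) (S n)
    rw [himg] at hlip
    simp only [ENNReal.coe_one, ENNReal.one_rpow, one_mul] at hlip
    exact le_trans (one_le_hausdorff_univ hK) hlip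
  have hunion : μH[1] (⋃ n, S n) = ∑' n, μH[1] (S n) :=
    measure_iUnion hS_disj (fun n => (hS_closed n).measurableSet)
  have htop : (⊤ : ℝ≥0∞) ≤ μH[1] (⋃ n, S n) := by
    rw [hunion]
    calc (⊤ : ℝ≥0∞) = ∑' _ : ℕ, (1:ℝ≥0∞) :=
          (ENNReal.tsum_const_eq_top_of_ne_zero one_ne_zero).symm
    _ ≤ ∑' n, μH[1] (S n) := ENNReal.tsum_le_tsum hS_ge
  exact top_le_iff.mp (le_trans htop (measure_mono (Set.iUnion_subset hS_sub)))

theorem eset_zero (N : ℕ) : Eset K 0 N = ∅ := by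
  ext z
  simp only [Eset, Set.mem_setOf_eq, Set.mem_empty_iff_false, iff_false]
  intro h
  obtain ⟨j, hj, -⟩ := h N le_rfl
  omega

end SymbS75

open SymbSp SymbS75 MeasureTheory

/-- For `K ≥ 2`: `H¹(Asym(σ_K)) = +∞`,
`H²(Prox(σ_K)) = H²(LY(σ_K)) = 1`, and `H²(Dist(σ_K)) = 0`. -/
theorem statement_8 (K : ℕ) (hK : 2 ≤ K) :
    μH[1] (AsymSet K) = ⊤ ∧ μH[2] (ProxSet K) = 1 ∧ μH[2] (LYset K) = 1 ∧
      μH[2] (DistSet K) = 0 := by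
  have hU2 : μH[2] (Set.univ : Set (SymbSp K × SymbSp K)) = 1 :=
    le_antisymm (hausdorff2_univ_le hK) (one_le_hausdorff2_univ hK)
  have hA2 : μH[2] (AsymSet K) = 0 := by
    rw [asymSet_eq_iUnion hK]
    exact measure_iUnion_null (fun N => hausdorff2_aset hK N)
  have hD2 : μH[2] (DistSet K) = 0 := by
    rw [distSet_eq_iUnion hK]
    refine measure_iUnion_null (fun m => measure_iUnion_null (fun N => ?_))
    cases m with
    | zero => rw [eset_zero]; exact measure_empty
    | succ m => exact hausdorff2_eset hK (m+1) N (by omega)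
  have hP2 : μH[2] (ProxSet K) = 1 := by
    rw [proxSet_eq_compl hK, measure_compl (measurable_distSet hK) (by rw [hD2]; simp),
      hD2, hU2]
    simp
  have hLY : μH[2] (LYset K) = 1 := by
    have : LYset K = ProxSet K \ AsymSet K := rfl
    rw [this, measure_diff_null hA2, hP2]
  exact ⟨hausdorff1_asym hK, hP2, hLY, hD2⟩
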